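/- Let G be a finite group, N ⊴ G, and π : G → G/N the quotient map. Suppose x₁, y₁, ..., xₙ, yₙ ∈ G are such that each pair (xᵢ, yᵢ) generates G, the elements x₁, y₁, and x₁y₁ each satisfy ⟨g⟩ ∩ N = {e}, and the images (π(xᵢ), π(yᵢ)) satisfy ⋂ᵢ Σ_{G/N}(π(xᵢ), π(yᵢ)) = {e}. Then ⋂ᵢ Σ_G(xᵢ, yᵢ) = {e}. -/
import Mathlib


def BSigma {G : Type*} [Group G] (x y : G) : Set G :=
  ⋃ k : G, (fun g => k⁻¹ * g * k) ''
    ((Subgroup.zpowers x : Set G) ∪ (Subgroup.zpowers y : Set G) ∪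
      (Subgroup.zpowers (x * y) : Set G))

lemma one_mem_BSigma {G : Type*} [Group G] (x y : G) : (1 : G) ∈ BSigma x y := by
  refine Set.mem_iUnion.2 ⟨1, ⟨1, Or.inl (Or.inl (Subgroup.one_mem _)), by simp⟩⟩

lemma BSigma_map {G H : Type*} [Group G] [Group H] (f : G →* H) {x y g : G}
    (hg : g ∈ BSigma x y) : f g ∈ BSigma (f x) (f y) := by
  obtain ⟨k, a, ha, rfl⟩ := Set.mem_iUnion.1 hg
  refine Set.mem_iUnion.2 ⟨f k, f a, ?_, by simp⟩
  rcases ha with (⟨m, rfl⟩ | ⟨m, rfl⟩) | ⟨m, rfl⟩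
  · exact Or.inl (Or.inl ⟨m, (map_zpow f x m).symm⟩)
  · exact Or.inl (Or.inr ⟨m, (map_zpow f y m).symm⟩)
  · exact Or.inr ⟨m, by rw [← map_mul, map_zpow]⟩

theorem stmt10 {G : Type*} [Group G] [Finite G] (N : Subgroup G) [N.Normal]
    (n : ℕ) (hn : 0 < n) (x y : Fin n → G)
    (hgen : ∀ i, Subgroup.closure {x i, y i} = ⊤)
    (hx : Subgroup.zpowers (x ⟨0, hn⟩) ⊓ N = ⊥)
    (hy : Subgroup.zpowers (y ⟨0, hn⟩) ⊓ N = ⊥)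
    (hxy : Subgroup.zpowers (x ⟨0, hn⟩ * y ⟨0, hn⟩) ⊓ N = ⊥)
    (hquot : ⋂ i, BSigma ((QuotientGroup.mk' N) (x i)) ((QuotientGroup.mk' N) (y i))
      = {(1 : G ⧸ N)}) :
    ⋂ i, BSigma (x i) (y i) = {(1 : G)} := by
  ext g
  simp only [Set.mem_iInter, Set.mem_singleton_iff]
  constructor
  · intro hg
    have hgN : g ∈ N := by
      have h1 : (QuotientGroup.mk' N) g = 1 := by
        rw [← Set.mem_singleton_iff, ← hquot]
        exact Set.mem_iInter.2 fun i => BSigma_map (QuotientGroup.mk' N) (hg i)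
      simpa using (QuotientGroup.eq_one_iff g).1 (by simpa using h1)
    obtain ⟨k, a, ha, rfl⟩ := Set.mem_iUnion.1 (hg ⟨0, hn⟩)
    have haN : a ∈ N := by
      have := Subgroup.Normal.conj_mem ‹N.Normal› _ hgN k
      simpa [mul_assoc] using this
    have ha1 : a = 1 := by
      rcases ha with (h | h) | h
      · have : a ∈ Subgroup.zpowers (x ⟨0, hn⟩) ⊓ N := ⟨h, haN⟩
        rw [hx] at this; simpa using this
      · have : a ∈ Subgroup.zpowers (y ⟨0, hn⟩) ⊓ N := ⟨h, haN⟩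
        rw [hy] at this; simpa using this
      · have : a ∈ Subgroup.zpowers (x ⟨0, hn⟩ * y ⟨0, hn⟩) ⊓ N := ⟨h, haN⟩
        rw [hxy] at this; simpa using this
    simp [ha1]
  · rintro rfl i
    exact one_mem_BSigma _ _
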